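/- Fix a real ρ > 0 and an integer n ≥ 2. Define the fully connected freshness values by the backward recursion G(n) = 1/(1+ρ) and G(j) = (j/n + (j(n−j)/(n−1))·G(j+1)) / (ρ + j/n + j(n−j)/(n−1)) for j = 1, …, n−1, and define b_i = (1 + nρ/i + (n/(n−1))(n−i))^{-1} · ∏_{j=1}^{i−1} (1 + (n−1)ρ/((n−j)j) + ((n−1)/n)·1/(n−j))^{-1} for 1 ≤ i ≤ n−1. Then G(1) = ∑_{i=1}^{n−1} b_i + (n/(n−1))·b_{n−1}·G(n). -/

import Mathlib

noncomputable def fcDd (ρ N : ℝ) (j : ℕ) : ℝ :=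
  ρ + (j : ℝ) / N + (j : ℝ) * (N - j) / (N - 1)

noncomputable def fcBb (ρ N : ℝ) (j : ℕ) : ℝ :=
  ((j : ℝ) * (N - j) / (N - 1)) / fcDd ρ N j

open Finset in
/-- Explicit solution of the fully connected network freshness recursion:
with `G n = 1/(1+ρ)` and
`G j = (j/n + (j(n-j)/(n-1)) G (j+1)) / (ρ + j/n + j(n-j)/(n-1))`
for `1 ≤ j ≤ n-1`, and
`b i = (1 + nρ/i + (n/(n-1))(n-i))⁻¹ ∏_{j=1}^{i-1} (1 + (n-1)ρ/((n-j)j) + ((n-1)/n)/(n-j))⁻¹`,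
one has `G 1 = ∑_{i=1}^{n-1} b i + (n/(n-1)) b (n-1) G n`. -/
theorem fully_connected_freshness_explicit_solution
    (ρ : ℝ) (hρ : 0 < ρ) (n : ℕ) (hn : 2 ≤ n)
    (G : ℕ → ℝ)
    (hGn : G n = 1 / (1 + ρ))
    (hGrec : ∀ j : ℕ, 1 ≤ j → j ≤ n - 1 →
      G j = ((j : ℝ) / n + ((j : ℝ) * ((n : ℝ) - j) / ((n : ℝ) - 1)) * G (j + 1)) /
        (ρ + (j : ℝ) / n + (j : ℝ) * ((n : ℝ) - j) / ((n : ℝ) - 1)))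
    (b : ℕ → ℝ)
    (hb : ∀ i : ℕ, 1 ≤ i → i ≤ n - 1 →
      b i = (1 + (n : ℝ) * ρ / i + ((n : ℝ) / ((n : ℝ) - 1)) * ((n : ℝ) - i))⁻¹ *
        ∏ j ∈ Icc 1 (i - 1),
          (1 + ((n : ℝ) - 1) * ρ / (((n : ℝ) - j) * j) +
            (((n : ℝ) - 1) / n) * (1 / ((n : ℝ) - j)))⁻¹) :
    G 1 = (∑ i ∈ Icc 1 (n - 1), b i) + ((n : ℝ) / ((n : ℝ) - 1)) * b (n - 1) * G n := by
  have hN2 : (2 : ℝ) ≤ (n : ℝ) := by exact_mod_cast hn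
  have hN0 : (0 : ℝ) < (n : ℝ) := by linarith
  have hN1 : (0 : ℝ) < (n : ℝ) - 1 := by linarith
  have hjle : ∀ j : ℕ, 1 ≤ j → j ≤ n - 1 → (1 : ℝ) ≤ (j : ℝ) ∧ (j : ℝ) ≤ (n : ℝ) - 1 := by
    intro j h1 h2
    refine ⟨by exact_mod_cast h1, ?_⟩
    have h3 : j + 1 ≤ n := by omega
    have h4 : ((j : ℝ) + 1) ≤ (n : ℝ) := by exact_mod_cast h3
    linarith
  have hD : ∀ j : ℕ, 1 ≤ j → j ≤ n - 1 → 0 < fcDd ρ (n : ℝ) j := by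
    intro j h1 h2
    obtain ⟨hj1, hj2⟩ := hjle j h1 h2
    have h3 : (0 : ℝ) ≤ (j : ℝ) / (n : ℝ) := by positivity
    have h4 : (0 : ℝ) ≤ (j : ℝ) * ((n : ℝ) - j) / ((n : ℝ) - 1) := by
      apply div_nonneg _ hN1.le
      nlinarith
    unfold fcDd; linarith
  have hfacB : ∀ j : ℕ, 1 ≤ j → j ≤ n - 1 →
      (1 + ((n : ℝ) - 1) * ρ / (((n : ℝ) - j) * j) +
        (((n : ℝ) - 1) / n) * (1 / ((n : ℝ) - j)))⁻¹ = fcBb ρ (n : ℝ) j := by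
    intro j h1 h2
    obtain ⟨hj1, hj2⟩ := hjle j h1 h2
    have hj0 : (j : ℝ) ≠ 0 := by linarith
    have hNj : ((n : ℝ) - j) ≠ 0 := by linarith
    have hDne : fcDd ρ (n : ℝ) j ≠ 0 := (hD j h1 h2).ne'
    have hY : 1 + ((n : ℝ) - 1) * ρ / (((n : ℝ) - j) * j) +
        (((n : ℝ) - 1) / n) * (1 / ((n : ℝ) - j))
        = fcDd ρ (n : ℝ) j * (((n : ℝ) - 1) / ((j : ℝ) * ((n : ℝ) - j))) := by
      unfold fcDd
      field_simp
      ring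
    rw [hY]
    unfold fcBb fcDd at *
    field_simp
  have hbB : ∀ i : ℕ, 1 ≤ i → i ≤ n - 1 →
      b i = ((i : ℝ) / n / fcDd ρ (n : ℝ) i) * ∏ j ∈ Icc 1 (i - 1), fcBb ρ (n : ℝ) j := by
    intro i h1 h2
    obtain ⟨hi1, hi2⟩ := hjle i h1 h2
    have hi0 : (i : ℝ) ≠ 0 := by linarith
    have hDne : fcDd ρ (n : ℝ) i ≠ 0 := (hD i h1 h2).ne'
    rw [hb i h1 h2]
    congr 1
    · have hX : 1 + (n : ℝ) * ρ / i + ((n : ℝ) / ((n : ℝ) - 1)) * ((n : ℝ) - i)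
          = fcDd ρ (n : ℝ) i * ((n : ℝ) / (i : ℝ)) := by
        unfold fcDd
        field_simp
        ring
      rw [hX]
      field_simp
    · exact Finset.prod_congr rfl fun j hj => by
        rw [Finset.mem_Icc] at hj
        exact hfacB j hj.1 (by omega)
  have key : ∀ k : ℕ, 1 ≤ k → k ≤ n - 1 →
      G 1 = (∑ i ∈ Icc 1 k, b i) + (∏ j ∈ Icc 1 k, fcBb ρ (n : ℝ) j) * G (k + 1) := by
    intro k hk
    induction k, hk using Nat.le_induction with
    | base =>
      intro h
      have hG1 := hGrec 1 le_rfl h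
      have hb1 := hbB 1 le_rfl h
      simp only [Finset.Icc_self, Finset.sum_singleton, Finset.prod_singleton]
      simp only [show (1 : ℕ) - 1 = 0 from rfl,
        Finset.Icc_eq_empty_of_lt (by norm_num : (0:ℕ) < 1),
        Finset.prod_empty, mul_one] at hb1
      rw [hG1, hb1]
      unfold fcBb fcDd
      push_cast
      ring
    | succ k hk ih =>
      intro hsucc
      have hk2 : k ≤ n - 1 := by omega
      have hrec := hGrec (k + 1) (by omega) hsucc
      have hbk := hbB (k + 1) (by omega) hsucc
      simp only [Nat.add_sub_cancel] at hbk
      have hsplit2 : G (k + 1) = ((k + 1 : ℕ) : ℝ) / n / fcDd ρ (n : ℝ) (k + 1) +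
          fcBb ρ (n : ℝ) (k + 1) * G (k + 2) := by
        rw [hrec]
        unfold fcBb fcDd
        ring
      rw [Finset.sum_Icc_succ_top (by omega : 1 ≤ k + 1),
        Finset.prod_Icc_succ_top (by omega : 1 ≤ k + 1), ih hk2, hsplit2, hbk]
      ring
  have hmain := key (n - 1) (by omega) le_rfl
  rw [Nat.sub_add_cancel (by omega : 1 ≤ n)] at hmain
  rw [hmain]
  congr 1
  have hsplit : (∏ j ∈ Icc 1 (n - 1), fcBb ρ (n : ℝ) j)
      = (∏ j ∈ Icc 1 (n - 2), fcBb ρ (n : ℝ) j) * fcBb ρ (n : ℝ) (n - 1) := by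
    have h : n - 1 = (n - 2) + 1 := by omega
    rw [h, Finset.prod_Icc_succ_top (by omega : 1 ≤ n - 2 + 1)]
  have hbn := hbB (n - 1) (by omega) le_rfl
  have h2 : (n - 1 : ℕ) - 1 = n - 2 := by omega
  rw [h2] at hbn
  have hcast : ((n - 1 : ℕ) : ℝ) = (n : ℝ) - 1 := by
    push_cast [Nat.cast_sub (by omega : 1 ≤ n)]
    ring
  have hDne : fcDd ρ (n : ℝ) (n - 1) ≠ 0 := (hD (n - 1) (by omega) le_rfl).ne'
  have hBeq : fcBb ρ (n : ℝ) (n - 1)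
      = ((n : ℝ) / ((n : ℝ) - 1)) * (((n - 1 : ℕ) : ℝ) / n / fcDd ρ (n : ℝ) (n - 1)) := by
    unfold fcBb
    rw [hcast]
    field_simp
    ring
  rw [hsplit, hbn, hBeq]
  ring
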